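/- In any Nash-social-welfare-maximizing integral allocation for 3 agents and 4 items where agent 1 reports b_1 = (2, 2, 1, 1), agent 1 cannot receive exactly the singleton bundle {3} or exactly {4}, for any reported valuations of agents 2 and 3. Consequently agent 1 receives either at least two items, or exactly item 1, or exactly item 2, so her reported utility is at least 2. -/

import Mathlib

noncomputable section
open scoped Classical
open Finset

/-- Utility of agent `a` in an integral allocation under additive valuations. -/
def fdUtil {N M : ℕ} (v : Fin N → Fin M → ℝ) (A : Fin N → Finset (Fin M)) (a : Fin N) : ℝ :=
  ∑ g ∈ A a, v a g

/-- Number of agents with positive utility. -/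
def fdPosCount {N M : ℕ} (v : Fin N → Fin M → ℝ) (A : Fin N → Finset (Fin M)) : ℕ :=
  (Finset.univ.filter (fun a => 0 < fdUtil v A a)).card

/-- Product of the utilities of agents with positive utility. -/
def fdNashProd {N M : ℕ} (v : Fin N → Fin M → ℝ) (A : Fin N → Finset (Fin M)) : ℝ :=
  ∏ a ∈ Finset.univ.filter (fun a => 0 < fdUtil v A a), fdUtil v A a

/-- An integral (partial) allocation: pairwise disjoint bundles. -/
def fdIsAlloc {N M : ℕ} (A : Fin N → Finset (Fin M)) : Prop :=
  ∀ j k, j ≠ k → Disjoint (A j) (A k)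

/-- MNW allocation: maximizes the number of agents with positive utility, and
subject to that maximizes the product of the positive utilities. -/
def fdIsMNW {N M : ℕ} (v : Fin N → Fin M → ℝ) (A : Fin N → Finset (Fin M)) : Prop :=
  fdIsAlloc A ∧
  (∀ B, fdIsAlloc B → fdPosCount v B ≤ fdPosCount v A) ∧
  (∀ B, fdIsAlloc B → fdPosCount v B = fdPosCount v A → fdNashProd v B ≤ fdNashProd v A)

namespace Stmt10Aux

def move (A : Fin 3 → Finset (Fin 4)) (h : Fin 4) : Fin 3 → Finset (Fin 4) :=
  fun a => if a = 0 then insert h (A 0) else (A a).erase h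

lemma move_alloc {A : Fin 3 → Finset (Fin 4)} (hA : fdIsAlloc A) (h : Fin 4) :
    fdIsAlloc (move A h) := by
  intro j k hjk
  unfold move
  rcases eq_or_ne j 0 with rfl | hj
  · rw [if_pos rfl, if_neg (Ne.symm hjk)]
    refine Finset.disjoint_left.2 ?_
    intro x hx hx'
    rcases Finset.mem_insert.1 hx with rfl | hx0
    · exact (Finset.mem_erase.1 hx').1 rfl
    · exact (Finset.disjoint_left.1 (hA 0 k hjk) hx0) (Finset.mem_erase.1 hx').2
  · rw [if_neg hj]
    rcases eq_or_ne k 0 with rfl | hk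
    · rw [if_pos rfl]
      refine Finset.disjoint_left.2 ?_
      intro x hx hx'
      rcases Finset.mem_insert.1 hx' with rfl | hx0
      · exact (Finset.mem_erase.1 hx).1 rfl
      · exact (Finset.disjoint_left.1 (hA j 0 hjk) (Finset.mem_erase.1 hx).2) hx0
    · rw [if_neg hk]
      exact (hA j k hjk).mono (Finset.erase_subset _ _) (Finset.erase_subset _ _)

lemma util_move_zero {v : Fin 3 → Fin 4 → ℝ} {A : Fin 3 → Finset (Fin 4)} {h : Fin 4}
    (hh : h ∉ A 0) : fdUtil v (move A h) 0 = fdUtil v A 0 + v 0 h := by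
  unfold fdUtil move
  rw [if_pos rfl, Finset.sum_insert hh]
  ring

lemma util_move_ne {v : Fin 3 → Fin 4 → ℝ} {A : Fin 3 → Finset (Fin 4)} {h : Fin 4}
    {a : Fin 3} (ha : a ≠ 0) :
    fdUtil v (move A h) a = fdUtil v A a - (if h ∈ A a then v a h else 0) := by
  unfold fdUtil move
  rw [if_neg ha]
  by_cases hm : h ∈ A a
  · rw [if_pos hm, Finset.sum_erase_eq_sub hm]
  · rw [if_neg hm, Finset.erase_eq_of_notMem hm, sub_zero]

lemma nash_eq (v : Fin 3 → Fin 4 → ℝ) (A : Fin 3 → Finset (Fin 4)) :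
    fdNashProd v A =
      (if 0 < fdUtil v A 0 then fdUtil v A 0 else 1) *
      (if 0 < fdUtil v A 1 then fdUtil v A 1 else 1) *
      (if 0 < fdUtil v A 2 then fdUtil v A 2 else 1) := by
  unfold fdNashProd
  rw [Finset.prod_filter, Fin.prod_univ_three]

lemma pc_congr {v : Fin 3 → Fin 4 → ℝ} {A B : Fin 3 → Finset (Fin 4)}
    (h : ∀ a, 0 < fdUtil v B a ↔ 0 < fdUtil v A a) :
    fdPosCount v B = fdPosCount v A := by
  unfold fdPosCount
  congr 1
  exact Finset.filter_congr (fun a _ => h a)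

end Stmt10Aux

namespace Stmt10Aux

variable {v : Fin 3 → Fin 4 → ℝ} {A : Fin 3 → Finset (Fin 4)}

lemma util_nonneg (hv : ∀ a g, 0 ≤ v a g) (a : Fin 3) : 0 ≤ fdUtil v A a :=
  Finset.sum_nonneg fun g _ => hv a g

lemma mem_le_util (hv : ∀ a g, 0 ≤ v a g) {a : Fin 3} {h : Fin 4} (hm : h ∈ A a) :
    v a h ≤ fdUtil v A a :=
  Finset.single_le_sum (fun g _ => hv a g) hm

lemma pair_le_util (hv : ∀ a g, 0 ≤ v a g) {a : Fin 3} {h1 h2 : Fin 4} (hne : h1 ≠ h2)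
    (hm1 : h1 ∈ A a) (hm2 : h2 ∈ A a) : v a h1 + v a h2 ≤ fdUtil v A a := by
  have hsub : ({h1, h2} : Finset (Fin 4)) ⊆ A a := by
    intro x hx
    rcases Finset.mem_insert.1 hx with rfl | hx
    · exact hm1
    · rw [Finset.mem_singleton.1 hx]; exact hm2
  calc v a h1 + v a h2 = ∑ g ∈ ({h1, h2} : Finset (Fin 4)), v a g :=
        (Finset.sum_pair hne).symm
    _ ≤ fdUtil v A a := Finset.sum_le_sum_of_subset_of_nonneg hsub (fun g _ _ => hv a g)

/-- S1: free steal of an item nobody (else) values positively. -/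
lemma steal_pos (hv : ∀ a g, 0 ≤ v a g) (hM : fdIsMNW v A) (h : Fin 4)
    (hh0 : h ∉ A 0) (hvpos : 0 < v 0 h) (hu0 : 0 < fdUtil v A 0)
    (hz : ∀ a, a ≠ 0 → h ∈ A a → v a h = 0) : False := by
  obtain ⟨halloc, hcount, hprod⟩ := hM
  set B := move A h with hB
  have hB0 : fdUtil v B 0 = fdUtil v A 0 + v 0 h := util_move_zero hh0
  have hBne : ∀ a : Fin 3, a ≠ 0 → fdUtil v B a = fdUtil v A a := by
    intro a ha
    rw [util_move_ne ha]
    split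
    · rw [hz a ha ‹_›, sub_zero]
    · rw [sub_zero]
  have hiff : ∀ a, 0 < fdUtil v B a ↔ 0 < fdUtil v A a := by
    intro a
    rcases eq_or_ne a 0 with rfl | ha
    · rw [hB0]; constructor <;> intro <;> linarith
    · rw [hBne a ha]
  have hpc := pc_congr hiff
  have := hprod B (move_alloc halloc h) hpc
  rw [nash_eq v B, nash_eq v A, hB0, hBne 1 (by decide), hBne 2 (by decide)] at this
  have h1 : (0:ℝ) < if 0 < fdUtil v A 1 then fdUtil v A 1 else 1 := by
    split_ifs with hh; exacts [hh, one_pos]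
  have h2 : (0:ℝ) < if 0 < fdUtil v A 2 then fdUtil v A 2 else 1 := by
    split_ifs with hh; exacts [hh, one_pos]
  rw [if_pos (by linarith : 0 < fdUtil v A 0 + v 0 h), if_pos hu0] at this
  have hlt := mul_lt_mul_of_pos_right (mul_lt_mul_of_pos_right
    (by linarith : fdUtil v A 0 < fdUtil v A 0 + v 0 h) h1) h2
  linarith

/-- S2: transfer inequality. -/
lemma transfer_ineq (hv : ∀ a g, 0 ≤ v a g) (hM : fdIsMNW v A) {j : Fin 3} (hj : j ≠ 0)
    {h : Fin 4} (hhj : h ∈ A j) (hu0 : 0 < fdUtil v A 0)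
    (hpos : 0 < fdUtil v A j - v j h) :
    (fdUtil v A 0 + v 0 h) * (fdUtil v A j - v j h) ≤ fdUtil v A 0 * fdUtil v A j := by
  obtain ⟨halloc, hcount, hprod⟩ := hM
  have hh0 : h ∉ A 0 := fun hm =>
    Finset.disjoint_left.1 (halloc 0 j (Ne.symm hj)) hm hhj
  set B := move A h with hB
  have hB0 : fdUtil v B 0 = fdUtil v A 0 + v 0 h := util_move_zero hh0
  have hBj : fdUtil v B j = fdUtil v A j - v j h := by
    rw [util_move_ne hj, if_pos hhj]
  have hBk : ∀ a : Fin 3, a ≠ 0 → a ≠ j → fdUtil v B a = fdUtil v A a := by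
    intro a ha haj
    rw [util_move_ne ha]
    have : h ∉ A a := fun hm => Finset.disjoint_left.1 (halloc a j haj) hm hhj
    rw [if_neg this, sub_zero]
  have huj : 0 < fdUtil v A j := by
    have := hv j h; linarith
  have hB0pos : 0 < fdUtil v B 0 := by rw [hB0]; have := hv 0 h; linarith
  have hiff : ∀ a, 0 < fdUtil v B a ↔ 0 < fdUtil v A a := by
    intro a
    rcases eq_or_ne a 0 with rfl | ha
    · simp [hB0pos, hu0]
    · rcases eq_or_ne a j with rfl | haj
      · rw [hBj]; simp [hpos, huj]
      · rw [hBk a ha haj]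
  have key := hprod B (move_alloc halloc h) (pc_congr hiff)
  rw [nash_eq v B, nash_eq v A] at key
  -- j = 1 or j = 2
  have hj12 : j = 1 ∨ j = 2 := by
    revert hj; exact Fin.cases (by simp) (fun i => by fin_cases i <;> simp) j
  have hB0pos' : 0 < fdUtil v A 0 + v 0 h := by rw [← hB0]; exact hB0pos
  rcases hj12 with rfl | rfl
  · rw [hB0, hBj, hBk 2 (by decide) (by decide),
      if_pos hB0pos', if_pos hpos, if_pos hu0, if_pos huj] at key
    have h2 : (0:ℝ) < if 0 < fdUtil v A 2 then fdUtil v A 2 else 1 := by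
      split_ifs with hh; exacts [hh, one_pos]
    exact le_of_mul_le_mul_right key h2
  · rw [hB0, hBj, hBk 1 (by decide) (by decide),
      if_pos hB0pos', if_pos hpos, if_pos hu0, if_pos huj] at key
    have h1 : (0:ℝ) < if 0 < fdUtil v A 1 then fdUtil v A 1 else 1 := by
      split_ifs with hh; exacts [hh, one_pos]
    have key' : (fdUtil v A 0 + v 0 h) * (fdUtil v A 2 - v 2 h) *
        (if 0 < fdUtil v A 1 then fdUtil v A 1 else 1) ≤
        fdUtil v A 0 * fdUtil v A 2 *
        (if 0 < fdUtil v A 1 then fdUtil v A 1 else 1) := by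
      nlinarith [key]
    exact le_of_mul_le_mul_right key' h1

end Stmt10Aux

namespace Stmt10Aux

variable {v : Fin 3 → Fin 4 → ℝ} {A : Fin 3 → Finset (Fin 4)}

/-- S3: if agent 0 has zero utility and an item can be moved to her without
destroying anyone's positivity, the positive count strictly increases. -/
lemma count_up (hv : ∀ a g, 0 ≤ v a g) (hM : fdIsMNW v A) (h : Fin 4)
    (hh0 : h ∉ A 0) (hvpos : 0 < v 0 h) (hu0 : fdUtil v A 0 = 0)
    (hcond : ∀ a, a ≠ 0 → h ∈ A a → 0 < fdUtil v A a - v a h ∨ fdUtil v A a = 0) :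
    False := by
  obtain ⟨halloc, hcount, hprod⟩ := hM
  set B := move A h with hB
  have hB0 : fdUtil v B 0 = fdUtil v A 0 + v 0 h := util_move_zero hh0
  have hsub : Finset.univ.filter (fun a => 0 < fdUtil v A a) ⊂
      Finset.univ.filter (fun a => 0 < fdUtil v B a) := by
    rw [Finset.ssubset_iff_of_subset]
    · refine ⟨0, ?_, ?_⟩
      · simp only [Finset.mem_filter, Finset.mem_univ, true_and]
        rw [hB0, hu0]; linarith
      · simp only [Finset.mem_filter, Finset.mem_univ, true_and]
        rw [hu0]; exact lt_irrefl 0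
    · intro a ha
      simp only [Finset.mem_filter, Finset.mem_univ, true_and] at ha ⊢
      have hane : a ≠ 0 := by rintro rfl; rw [hu0] at ha; exact lt_irrefl 0 ha
      rw [util_move_ne hane]
      by_cases hm : h ∈ A a
      · rw [if_pos hm]
        rcases hcond a hane hm with hc | hc
        · exact hc
        · rw [hc] at ha; exact absurd ha (lt_irrefl 0)
      · rw [if_neg hm, sub_zero]; exact ha
  have := hcount B (move_alloc halloc h)
  unfold fdPosCount at this
  exact absurd this (not_le.2 (Finset.card_lt_card hsub))

/-- the arithmetic contradiction when one agent j ≠ 0 holds two of the three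
items that agent 0 values at total ≥ 3, while agent 0 holds a single item of
value 1. -/
lemma two_items (hv : ∀ a g, 0 ≤ v a g) (hM : fdIsMNW v A) {j : Fin 3} (hj : j ≠ 0)
    {h1 h2 : Fin 4} (hne : h1 ≠ h2) (hm1 : h1 ∈ A j) (hm2 : h2 ∈ A j)
    (hp1 : 0 < v j h1) (hp2 : 0 < v j h2)
    (hu0 : fdUtil v A 0 = 1) (hc1 : 1 ≤ v 0 h1) (hc2 : 1 ≤ v 0 h2)
    (hc3 : 3 ≤ v 0 h1 + v 0 h2) : False := by
  have hpair := pair_le_util hv hne hm1 hm2 (a := j)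
  have ht1 : 0 < fdUtil v A j - v j h1 := by linarith
  have ht2 : 0 < fdUtil v A j - v j h2 := by linarith
  have hu0pos : (0:ℝ) < fdUtil v A 0 := by rw [hu0]; norm_num
  have k1 := transfer_ineq hv hM hj hm1 hu0pos ht1
  have k2 := transfer_ineq hv hM hj hm2 hu0pos ht2
  rw [hu0] at k1 k2
  have hujpos : 0 < fdUtil v A j := by linarith
  -- multiply k1 by (1 + v 0 h2) and k2 by (1 + v 0 h1) and add
  have q1 := mul_le_mul_of_nonneg_left k1 (by linarith : (0:ℝ) ≤ 1 + v 0 h2)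
  have q2 := mul_le_mul_of_nonneg_left k2 (by linarith : (0:ℝ) ≤ 1 + v 0 h1)
  have hcd : 2 ≤ v 0 h1 * v 0 h2 := by
    nlinarith [mul_nonneg (sub_nonneg.2 hc1) (sub_nonneg.2 hc2)]
  nlinarith [mul_le_mul_of_nonneg_left hpair
      (by nlinarith : (0:ℝ) ≤ (1 + v 0 h1) * (1 + v 0 h2)),
    mul_pos hujpos (by linarith : (0:ℝ) < v 0 h1 * v 0 h2 - 1)]

end Stmt10Aux

namespace Stmt10Aux

variable {v : Fin 3 → Fin 4 → ℝ} {A : Fin 3 → Finset (Fin 4)}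

lemma fin3_ne :  ∀ x : Fin 3, x ≠ 0 → x = 1 ∨ x = 2 := by decide

lemma not_empty (hv : ∀ a g, 0 ≤ v a g) (h00 : v 0 0 = 2) (h01 : v 0 1 = 2)
    (h02 : v 0 2 = 1) (hM : fdIsMNW v A) (hA0 : A 0 = ∅) : False := by
  have hu0 : fdUtil v A 0 = 0 := by simp [fdUtil, hA0]
  have hget : ∀ h : Fin 4, 0 < v 0 h →
      (∀ a, a ≠ 0 → h ∈ A a → 0 < fdUtil v A a - v a h ∨ fdUtil v A a = 0) → False :=
    fun h hp hc => count_up hv hM h (by simp [hA0]) hp hu0 hc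
  have holder : ∀ h : Fin 4, 0 < v 0 h →
      (∃ j, j ≠ 0 ∧ h ∈ A j ∧ fdUtil v A j = v j h ∧ 0 < fdUtil v A j) ∨
      ((∀ a, a ≠ 0 → h ∈ A a → 0 < fdUtil v A a - v a h ∨ fdUtil v A a = 0)) := by
    intro h hp
    by_cases hc : ∀ a, a ≠ 0 → h ∈ A a → 0 < fdUtil v A a - v a h ∨ fdUtil v A a = 0
    · exact Or.inr hc
    · push_neg at hc
      obtain ⟨j, hj, hjm, hle, hne⟩ := hc
      have h1 := mem_le_util hv hjm
      have h2 := util_nonneg (A := A) hv j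
      exact Or.inl ⟨j, hj, hjm, by linarith [lt_of_le_of_ne h2 (Ne.symm hne)],
        lt_of_le_of_ne h2 (Ne.symm hne)⟩
  rcases holder 0 (by rw [h00]; norm_num) with ⟨j, hj, hjm, hjeq, hjpos⟩ | hc
  · rcases holder 1 (by rw [h01]; norm_num) with ⟨k, hk, hkm, hkeq, hkpos⟩ | hc
    · have hjk : j ≠ k := by
        rintro rfl
        have := pair_le_util hv (show (0:Fin 4) ≠ 1 by decide) hjm hkm
        linarith
      apply hget 2 (by rw [h02]; norm_num)
      intro a ha hm
      left
      have haj : a = j ∨ a = k := by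
        rcases fin3_ne a ha with rfl | rfl <;> rcases fin3_ne j hj with hj' | hj' <;>
          rcases fin3_ne k hk with hk' | hk' <;> simp_all
      rcases haj with rfl | rfl
      · have := pair_le_util hv (show (0:Fin 4) ≠ 2 by decide) hjm hm
        linarith
      · have := pair_le_util hv (show (1:Fin 4) ≠ 2 by decide) hkm hm
        linarith
    · exact hget 1 (by rw [h01]; norm_num) hc
  · exact hget 0 (by rw [h00]; norm_num) hc

lemma not_single (hv : ∀ a g, 0 ≤ v a g) (h00 : v 0 0 = 2) (h01 : v 0 1 = 2)
    (hM : fdIsMNW v A) {g g' : Fin 4} (hgg' : g ≠ g') (hg0 : g ≠ 0) (hg1 : g ≠ 1)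
    (hg'0 : g' ≠ 0) (hg'1 : g' ≠ 1) (hvg : v 0 g = 1) (hvg' : v 0 g' = 1)
    (hA0 : A 0 = {g}) : False := by
  have hu0 : fdUtil v A 0 = 1 := by simp [fdUtil, hA0, hvg]
  have hu0pos : 0 < fdUtil v A 0 := by rw [hu0]; norm_num
  have holder : ∀ h : Fin 4, h ≠ g → 0 < v 0 h → ∃ j, j ≠ 0 ∧ h ∈ A j ∧ 0 < v j h := by
    intro h hhg hp
    by_contra hno
    push_neg at hno
    refine steal_pos hv hM h ?_ hp hu0pos ?_
    · rw [hA0]; simp [hhg]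
    · intro a ha hm
      exact le_antisymm (hno a ha hm) (hv a h)
  obtain ⟨j0, hj0, hm0, hp0⟩ := holder 0 hg0.symm (by rw [h00]; norm_num)
  obtain ⟨j1, hj1, hm1, hp1⟩ := holder 1 hg1.symm (by rw [h01]; norm_num)
  obtain ⟨j2, hj2, hm2, hp2⟩ := holder g' (hgg'.symm) (by norm_num [hvg'])
  have hpig : j0 = j1 ∨ j0 = j2 ∨ j1 = j2 := by
    rcases fin3_ne j0 hj0 with h0 | h0 <;> rcases fin3_ne j1 hj1 with h1 | h1 <;>
      rcases fin3_ne j2 hj2 with h2 | h2 <;> simp_all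
  rcases hpig with heq | heq | heq
  · subst heq
    exact two_items hv hM hj0 (show (0:Fin 4) ≠ 1 by decide) hm0 hm1 hp0 hp1 hu0
      (by rw [h00]; norm_num) (by rw [h01]; norm_num) (by rw [h00, h01]; norm_num)
  · subst heq
    exact two_items hv hM hj0 (Ne.symm hg'0) hm0 hm2 hp0 hp2 hu0
      (by rw [h00]; norm_num) (by norm_num [hvg']) (by rw [h00, hvg']; norm_num)
  · subst heq
    exact two_items hv hM hj1 (Ne.symm hg'1) hm1 hm2 hp1 hp2 hu0
      (by rw [h01]; norm_num) (by norm_num [hvg']) (by rw [h01, hvg']; norm_num)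

lemma main (hv : ∀ a g, 0 ≤ v a g) (h00 : v 0 0 = 2) (h01 : v 0 1 = 2)
    (h02 : v 0 2 = 1) (h03 : v 0 3 = 1) (hM : fdIsMNW v A) :
    A 0 ≠ ({2} : Finset (Fin 4)) ∧ A 0 ≠ ({3} : Finset (Fin 4)) ∧ 2 ≤ fdUtil v A 0 := by
  have hne2 : A 0 ≠ {2} := fun hh =>
    not_single hv h00 h01 hM (g := 2) (g' := 3) (by decide) (by decide) (by decide)
      (by decide) (by decide) h02 h03 hh
  have hne3 : A 0 ≠ {3} := fun hh =>
    not_single hv h00 h01 hM (g := 3) (g' := 2) (by decide) (by decide) (by decide)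
      (by decide) (by decide) h03 h02 hh
  have hnee : A 0 ≠ ∅ := fun hh => not_empty hv h00 h01 h02 hM hh
  refine ⟨hne2, hne3, ?_⟩
  have key : ∀ S : Finset (Fin 4), S = ∅ ∨ S = {2} ∨ S = {3} ∨ (0:Fin 4) ∈ S ∨
      (1:Fin 4) ∈ S ∨ ((2:Fin 4) ∈ S ∧ (3:Fin 4) ∈ S) := by decide
  rcases key (A 0) with h | h | h | h | h | ⟨h, h'⟩
  · exact absurd h hnee
  · exact absurd h hne2
  · exact absurd h hne3
  · have := mem_le_util hv h; linarith [h00 ▸ this]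
  · have := mem_le_util hv h; linarith [h01 ▸ this]
  · have := pair_le_util hv (show (2:Fin 4) ≠ 3 by decide) h h'
    rw [h02, h03] at this; linarith

end Stmt10Aux

/-- with 3 agents and 4 items, if agent 1 reports
`b₁ = (2, 2, 1, 1)` then in every MNW allocation (for arbitrary nonnegative
reports of agents 2 and 3) agent 1's bundle is neither exactly `{item 3}` nor
exactly `{item 4}` (0-indexed: `{2}` and `{3}`); consequently her reported
utility is at least `2`. -/
theorem stmt10 (b2 b3 : Fin 4 → ℝ) (hb2 : ∀ j, 0 ≤ b2 j) (hb3 : ∀ j, 0 ≤ b3 j) :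
    let b : Fin 3 → Fin 4 → ℝ := ![![2, 2, 1, 1], b2, b3]
    ∀ A : Fin 3 → Finset (Fin 4), fdIsMNW b A →
      A 0 ≠ ({2} : Finset (Fin 4)) ∧ A 0 ≠ ({3} : Finset (Fin 4)) ∧
      2 ≤ fdUtil b A 0 := by
  intro b A hM
  have hb : b = ![![2, 2, 1, 1], b2, b3] := rfl
  have hv : ∀ a g, 0 ≤ b a g := by
    intro a g
    fin_cases a
    · fin_cases g <;> norm_num [hb]
    · simpa [hb] using hb2 g
    · simpa [hb] using hb3 g
  exact Stmt10Aux.main hv (by norm_num [hb]) (by norm_num [hb]) (by norm_num [hb]; rfl)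
    (by norm_num [hb]; rfl) hM
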